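/- Suppose ‖l̄‖ < c²/(4‖T‖³‖A₁‖). Then there exists r* with 0 < r* < c/(2‖T‖³‖A₁‖) such that there is exactly one ū ∈ (ker T)⊥ with ‖ū‖ ≤ r* and G ū + G₁(ū) = l̄; that is, the discrete nonlinear problem 𝐀 ū + 𝐀₁(ū) = 𝐥 has a unique solution in the ball 𝐁_{r*} = {u ∈ Ran G : ‖u‖ ≤ r*}. -/

import Mathlib

open scoped RealInnerProductSpace

set_option maxHeartbeats 1000000 in
/-- If `‖l̄‖ < c²/(4‖T‖³‖A₁‖)` then the discrete nonlinear problem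
`G ū + G₁(ū) = l̄` has a unique solution in some ball `𝐁_{r*}` of `Ran G = (ker T)ᗮ`
with `0 < r* < c/(2‖T‖³‖A₁‖)`. -/
theorem discrete_nonlinear_problem_unique_solution
    {V H : Type*} [NormedAddCommGroup V] [InnerProductSpace ℝ V] [CompleteSpace V]
    [NormedAddCommGroup H] [InnerProductSpace ℝ H] [CompleteSpace H]
    (B : V →L[ℝ] V) (α : ℝ) (hα : 0 < α)
    (hB : ∀ v : V, α * ‖v‖ ^ 2 ≤ ⟪B v, v⟫)
    (T : H →L[ℝ] V) (hT : Function.Surjective T)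
    (G : H →L[ℝ] H) (hG : G = (ContinuousLinearMap.adjoint T).comp (B.comp T))
    (c : ℝ) (hc : 0 < c) (hcG : ∀ x ∈ (LinearMap.ker (T : H →ₗ[ℝ] V))ᗮ, c * ‖x‖ ≤ ‖G x‖)
    (A₁ : V →L[ℝ] V →L[ℝ] V) (hA₁ : ‖A₁‖ ≠ 0)
    (G₁ : H → H) (hG₁ : ∀ x : H, G₁ x = ContinuousLinearMap.adjoint T (A₁ (T x) (T x)))
    (lbar : H) (hlbar : lbar ∈ LinearMap.range (ContinuousLinearMap.adjoint T : V →ₗ[ℝ] H))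
    (hl : ‖lbar‖ < c ^ 2 / (4 * ‖T‖ ^ 3 * ‖A₁‖)) :
    ∃ rs : ℝ, 0 < rs ∧ rs < c / (2 * ‖T‖ ^ 3 * ‖A₁‖) ∧
      ∃! u : H, u ∈ (LinearMap.ker (T : H →ₗ[ℝ] V))ᗮ ∧ ‖u‖ ≤ rs ∧ G u + G₁ u = lbar := by
  classical
  set K : Submodule ℝ H := (LinearMap.ker (T : H →ₗ[ℝ] V))ᗮ with hKdef
  -- V is nontrivial, so ‖T‖ > 0
  have hA₁ne : A₁ ≠ 0 := fun h => hA₁ (by rw [h]; exact ContinuousLinearMap.opNorm_zero)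
  have hVnt : ∃ v : V, v ≠ 0 := by
    by_contra h
    push_neg at h
    exact hA₁ne (by ext v w; simp [h (A₁ v w)])
  have hTnorm : 0 < ‖T‖ := by
    rcases hVnt with ⟨v, hv⟩
    rcases hT v with ⟨x, rfl⟩
    have hT0 : T ≠ 0 := fun h0 => hv (by simp [h0])
    exact norm_pos_iff.mpr hT0
  -- range of the adjoint lies in K
  have hadj : ∀ v : V, (ContinuousLinearMap.adjoint T) v ∈ K := by
    intro v
    rw [hKdef, Submodule.mem_orthogonal]
    intro y hy
    rw [LinearMap.mem_ker] at hy
    rw [real_inner_comm, ContinuousLinearMap.adjoint_inner_left, (show T y = 0 from hy), inner_zero_right]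
  have hGmem : ∀ x : H, G x ∈ K := fun x => by
    simpa [hG] using hadj (B (T x))
  -- the restricted operator 𝔾 : K → K
  let 𝔾 : K →L[ℝ] K := (G.comp K.subtypeL).codRestrict K fun x => hGmem x
  have h𝔾coe : ∀ x : K, ((𝔾 x : H)) = G (x : H) := fun x => rfl
  -- T restricted to K is a continuous linear equivalence onto V
  let f₀ : K →L[ℝ] V := T.comp K.subtypeL
  have hker : LinearMap.ker (f₀ : K →ₗ[ℝ] V) = ⊥ := by
    rw [LinearMap.ker_eq_bot']
    intro x hx
    have hx1 : (x : H) ∈ LinearMap.ker (T : H →ₗ[ℝ] V) := by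
      simpa [f₀] using hx
    have hx2 : (x : H) ∈ (LinearMap.ker (T : H →ₗ[ℝ] V))ᗮ := x.2
    have : (x : H) = 0 := by
      have := hx2 (x : H) hx1
      simpa [real_inner_self_eq_norm_sq] using this
    exact Subtype.ext this
  have hrange : LinearMap.range (f₀ : K →ₗ[ℝ] V) = ⊤ := by
    rw [Submodule.eq_top_iff']
    intro v
    rcases hT v with ⟨x, hx⟩
    obtain ⟨y, hy, z, hz, hxyz⟩ := (LinearMap.ker (T : H →ₗ[ℝ] V)).exists_add_mem_mem_orthogonal x
    refine ⟨⟨z, hz⟩, ?_⟩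
    have : T z = v := by
      rw [LinearMap.mem_ker] at hy
      rw [← hx, hxyz]
      simp [show T y = 0 from hy]
    simpa [f₀] using this
  let e : K ≃L[ℝ] V := ContinuousLinearEquiv.ofBijective f₀ hker hrange
  have he : ∀ x : K, e x = T (x : H) := fun x => rfl
  set d : ℝ := ‖(e.symm : V →L[ℝ] K)‖ with hd
  have hd0 : 0 ≤ d := by rw [hd]; exact ContinuousLinearMap.opNorm_nonneg _
  have hlow : ∀ x : K, ‖x‖ ≤ (d + 1) * ‖T (x : H)‖ := by
    intro x
    have h1 : ‖x‖ ≤ d * ‖T (x : H)‖ := by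
      calc ‖x‖ = ‖e.symm (e x)‖ := by rw [e.symm_apply_apply]
      _ ≤ d * ‖e x‖ := (e.symm : V →L[ℝ] K).le_opNorm (e x)
      _ = d * ‖T (x : H)‖ := by rw [he x]
    nlinarith [norm_nonneg (T (x : H))]
  -- the bilinear form and coercivity
  let b : K →L[ℝ] K →L[ℝ] ℝ :=
    LinearMap.mkContinuous₂
      (LinearMap.mk₂ ℝ (fun x y => (inner ℝ (𝔾 x) y : ℝ))
        (fun x x' y => by simp [inner_add_left])
        (fun r x y => by simp [real_inner_smul_left])
        (fun x y y' => by simp [inner_add_right])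
        (fun r x y => by simp [real_inner_smul_right]))
      ‖𝔾‖ (fun x y => by
        simp only [LinearMap.mk₂_apply, Real.norm_eq_abs]
        calc |(inner ℝ (𝔾 x) y : ℝ)| ≤ ‖𝔾 x‖ * ‖y‖ := abs_real_inner_le_norm _ _
        _ ≤ ‖𝔾‖ * ‖x‖ * ‖y‖ := by
            have := 𝔾.le_opNorm x
            nlinarith [norm_nonneg y])
  have hbapp : ∀ x y : K, b x y = (inner ℝ (𝔾 x) y : ℝ) := fun x y => rfl
  have hcoer : IsCoercive b := by
    refine ⟨α / (d + 1) ^ 2, by positivity, fun x => ?_⟩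
    have h1 : b x x = ⟪B (T (x : H)), T (x : H)⟫ := by
      rw [hbapp]
      rw [Submodule.coe_inner, h𝔾coe, hG]
      simp only [ContinuousLinearMap.comp_apply]
      rw [ContinuousLinearMap.adjoint_inner_left]
    have h2 : α * ‖T (x : H)‖ ^ 2 ≤ b x x := h1 ▸ hB (T (x : H))
    have h3 : ‖x‖ ≤ (d + 1) * ‖T (x : H)‖ := hlow x
    have h4 : 0 ≤ ‖T (x : H)‖ := norm_nonneg _
    have h5 : 0 ≤ ‖x‖ := norm_nonneg _
    rw [div_mul_eq_mul_div, div_mul_eq_mul_div, div_le_iff₀ (by positivity : (0:ℝ) < (d+1)^2)]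
    have h6 : ‖x‖ * ‖x‖ ≤ ((d + 1) * ‖T (x : H)‖) * ((d + 1) * ‖T (x : H)‖) :=
      mul_le_mul h3 h3 h5 (by positivity)
    have h7 : (0:ℝ) ≤ (d + 1) ^ 2 := by positivity
    nlinarith [mul_le_mul_of_nonneg_left h2 h7]
  let E := hcoer.continuousLinearEquivOfBilin
  have hE : ∀ x : K, E x = 𝔾 x := by
    intro x
    refine ext_inner_right ℝ fun w => ?_
    rw [hcoer.continuousLinearEquivOfBilin_apply, hbapp]
  -- lbar and G₁ land in K
  have hlK : lbar ∈ K := by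
    obtain ⟨w, hw⟩ := hlbar
    exact hw ▸ hadj w
  have hG₁mem : ∀ x : H, G₁ x ∈ K := fun x => by rw [hG₁]; exact hadj _
  let N : K → K := fun u => ⟨lbar - G₁ (u : H), K.sub_mem hlK (hG₁mem _)⟩
  let Φ : K → K := fun u => E.symm (N u)
  have h𝔾Φ : ∀ u : K, 𝔾 (Φ u) = N u := fun u => by
    rw [← hE]; exact E.apply_symm_apply _
  -- the fixed point equation
  have hfix : ∀ u : K, Φ u = u ↔ G (u : H) + G₁ (u : H) = lbar := by
    intro u
    constructor
    · intro h
      have h1 : 𝔾 u = N u := by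
        conv_lhs => rw [← h]
        exact h𝔾Φ u
      have h2 : G (u : H) = lbar - G₁ (u : H) := by
        have := congrArg (Subtype.val) h1
        simpa [h𝔾coe, N] using this
      rw [h2]; abel
    · intro h
      have h2 : (𝔾 u : H) = (N u : H) := by
        rw [h𝔾coe]
        show G (u : H) = lbar - G₁ (u : H)
        rw [← h]; abel
      have h1 : 𝔾 u = N u := Subtype.ext h2
      have h3 : E u = N u := by rw [hE, h1]
      show E.symm (N u) = u
      rw [← h3, E.symm_apply_apply]
  -- quantitative estimates
  set Kc : ℝ := ‖T‖ ^ 3 * ‖A₁‖ with hKc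
  have hA₁pos : 0 < ‖A₁‖ := lt_of_le_of_ne (ContinuousLinearMap.opNorm_nonneg A₁) (Ne.symm hA₁)
  have hKc0 : 0 < Kc := by positivity
  have hadjnorm : ‖(ContinuousLinearMap.adjoint T : V →L[ℝ] H)‖ = ‖T‖ :=
    LinearIsometryEquiv.norm_map ContinuousLinearMap.adjoint T
  have hG₁lip : ∀ x y : H, ‖G₁ x - G₁ y‖ ≤ Kc * (‖x‖ + ‖y‖) * ‖x - y‖ := by
    intro x y
    have hsplit : A₁ (T x) (T x) - A₁ (T y) (T y)
        = A₁ (T x) (T x - T y) + (A₁ (T x) - A₁ (T y)) (T y) := by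
      simp only [map_sub, ContinuousLinearMap.sub_apply]
      abel
    have h0 : G₁ x - G₁ y
        = (ContinuousLinearMap.adjoint T) (A₁ (T x) (T x) - A₁ (T y) (T y)) := by
      rw [hG₁, hG₁, ← map_sub]
    have h1 : ‖G₁ x - G₁ y‖ ≤ ‖T‖ * ‖A₁ (T x) (T x) - A₁ (T y) (T y)‖ := by
      rw [h0, ← hadjnorm]
      exact (ContinuousLinearMap.adjoint T).le_opNorm _
    have h2 : ‖A₁ (T x) (T x) - A₁ (T y) (T y)‖
        ≤ ‖A₁ (T x) (T x - T y)‖ + ‖(A₁ (T x) - A₁ (T y)) (T y)‖ := by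
      rw [hsplit]; exact norm_add_le _ _
    have h3 : ‖A₁ (T x) (T x - T y)‖ ≤ ‖A₁‖ * ‖T x‖ * ‖T x - T y‖ :=
      A₁.le_opNorm₂ _ _
    have h4 : ‖(A₁ (T x) - A₁ (T y)) (T y)‖ ≤ ‖A₁‖ * ‖T x - T y‖ * ‖T y‖ := by
      calc ‖(A₁ (T x) - A₁ (T y)) (T y)‖ ≤ ‖A₁ (T x) - A₁ (T y)‖ * ‖T y‖ :=
            ContinuousLinearMap.le_opNorm _ _
      _ ≤ ‖A₁‖ * ‖T x - T y‖ * ‖T y‖ := by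
          have h5 : ‖A₁ (T x) - A₁ (T y)‖ ≤ ‖A₁‖ * ‖T x - T y‖ := by
            rw [← map_sub]; exact A₁.le_opNorm _
          nlinarith [norm_nonneg (T y)]
    have hTx : ‖T x‖ ≤ ‖T‖ * ‖x‖ := T.le_opNorm x
    have hTy : ‖T y‖ ≤ ‖T‖ * ‖y‖ := T.le_opNorm y
    have hTxy : ‖T x - T y‖ ≤ ‖T‖ * ‖x - y‖ := by
      rw [← map_sub]; exact T.le_opNorm _
    have hTn : (0:ℝ) ≤ ‖T‖ := norm_nonneg _
    have hxn : (0:ℝ) ≤ ‖x‖ := norm_nonneg _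
    have hyn : (0:ℝ) ≤ ‖y‖ := norm_nonneg _
    have hxyn : (0:ℝ) ≤ ‖x - y‖ := norm_nonneg _
    have hTxyn : (0:ℝ) ≤ ‖T x - T y‖ := norm_nonneg _
    have hTxn : (0:ℝ) ≤ ‖T x‖ := norm_nonneg _
    have hTyn : (0:ℝ) ≤ ‖T y‖ := norm_nonneg _
    have h6 : ‖A₁‖ * ‖T x‖ * ‖T x - T y‖ ≤ ‖A₁‖ * (‖T‖ * ‖x‖) * (‖T‖ * ‖x - y‖) :=
      mul_le_mul (mul_le_mul_of_nonneg_left hTx hA₁pos.le) hTxy hTxyn (by positivity)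
    have h7 : ‖A₁‖ * ‖T x - T y‖ * ‖T y‖ ≤ ‖A₁‖ * (‖T‖ * ‖x - y‖) * (‖T‖ * ‖y‖) :=
      mul_le_mul (mul_le_mul_of_nonneg_left hTxy hA₁pos.le) hTy hTyn (by positivity)
    have h8 : ‖A₁ (T x) (T x) - A₁ (T y) (T y)‖
        ≤ ‖A₁‖ * (‖T‖ * ‖x‖) * (‖T‖ * ‖x - y‖) + ‖A₁‖ * (‖T‖ * ‖x - y‖) * (‖T‖ * ‖y‖) :=
      le_trans h2 (add_le_add (le_trans h3 h6) (le_trans h4 h7))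
    rw [hKc]
    calc ‖G₁ x - G₁ y‖
        ≤ ‖T‖ * (‖A₁‖ * (‖T‖ * ‖x‖) * (‖T‖ * ‖x - y‖) + ‖A₁‖ * (‖T‖ * ‖x - y‖) * (‖T‖ * ‖y‖)) :=
          le_trans h1 (mul_le_mul_of_nonneg_left h8 hTn)
    _ = ‖T‖ ^ 3 * ‖A₁‖ * (‖x‖ + ‖y‖) * ‖x - y‖ := by ring
  have hG₁bound : ∀ x : H, ‖G₁ x‖ ≤ Kc * ‖x‖ ^ 2 := by
    intro x
    have h0 : G₁ (0 : H) = 0 := by rw [hG₁]; simp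
    have := hG₁lip x 0
    rw [h0, sub_zero, sub_zero, norm_zero, add_zero] at this
    nlinarith [this]
  -- the key contraction estimate
  have hΦlip : ∀ u v : K, c * ‖Φ u - Φ v‖ ≤ Kc * (‖u‖ + ‖v‖) * ‖u - v‖ := by
    intro u v
    have hmem : ((Φ u - Φ v : K) : H) ∈ (LinearMap.ker (T : H →ₗ[ℝ] V))ᗮ := SetLike.coe_mem _
    have h1 : c * ‖Φ u - Φ v‖ ≤ ‖G ((Φ u - Φ v : K) : H)‖ := by
      have := hcG _ hmem
      simpa using this
    have h2 : G ((Φ u - Φ v : K) : H) = G₁ (v : H) - G₁ (u : H) := by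
      have h3 : (𝔾 (Φ u - Φ v) : H) = G ((Φ u - Φ v : K) : H) := h𝔾coe _
      rw [← h3, map_sub, h𝔾Φ, h𝔾Φ]
      show ((N u : K) : H) - ((N v : K) : H) = _
      simp only [N]
      abel
    rw [h2] at h1
    have h4 : ‖G₁ (v : H) - G₁ (u : H)‖ ≤ Kc * (‖v‖ + ‖u‖) * ‖(v : H) - (u : H)‖ := by
      simpa using hG₁lip (v : H) (u : H)
    have h5 : ‖(v : H) - (u : H)‖ = ‖u - v‖ := by
      rw [← norm_neg, neg_sub]
      rfl
    rw [h5] at h4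
    calc c * ‖Φ u - Φ v‖ ≤ ‖G₁ (v : H) - G₁ (u : H)‖ := h1
    _ ≤ Kc * (‖v‖ + ‖u‖) * ‖u - v‖ := h4
    _ = Kc * (‖u‖ + ‖v‖) * ‖u - v‖ := by ring
  have hΦbound : ∀ u : K, c * ‖Φ u‖ ≤ ‖lbar‖ + Kc * ‖u‖ ^ 2 := by
    intro u
    have hmem : ((Φ u : K) : H) ∈ (LinearMap.ker (T : H →ₗ[ℝ] V))ᗮ := SetLike.coe_mem _
    have h1 : c * ‖Φ u‖ ≤ ‖G ((Φ u : K) : H)‖ := by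
      have := hcG _ hmem
      simpa using this
    have h2 : G ((Φ u : K) : H) = lbar - G₁ (u : H) := by
      have h3 : (𝔾 (Φ u) : H) = G ((Φ u : K) : H) := h𝔾coe _
      rw [← h3, h𝔾Φ]
    rw [h2] at h1
    have h4 : ‖lbar - G₁ (u : H)‖ ≤ ‖lbar‖ + ‖G₁ (u : H)‖ := norm_sub_le _ _
    have h5 := hG₁bound (u : H)
    have h6 : ‖(u : H)‖ = ‖u‖ := rfl
    rw [h6] at h5
    linarith
  -- choice of radius
  set L : ℝ := ‖lbar‖ with hLdef
  have hL0 : 0 ≤ L := norm_nonneg _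
  have hl' : L * (4 * Kc) < c ^ 2 := by
    rw [hLdef, hKc]
    have h4 : (0:ℝ) < 4 * ‖T‖ ^ 3 * ‖A₁‖ := by positivity
    calc ‖lbar‖ * (4 * (‖T‖ ^ 3 * ‖A₁‖)) = ‖lbar‖ * (4 * ‖T‖ ^ 3 * ‖A₁‖) := by ring
    _ < c ^ 2 / (4 * ‖T‖ ^ 3 * ‖A₁‖) * (4 * ‖T‖ ^ 3 * ‖A₁‖) := by
        exact mul_lt_mul_of_pos_right hl h4
    _ = c ^ 2 := by field_simp
  obtain ⟨rs, hrs0, hrsX⟩ : ∃ rs : ℝ, 0 < rs ∧ rs * (c * (4 * Kc)) = L * (4 * Kc) + c ^ 2 :=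
    ⟨L / c + c / (4 * Kc), by positivity, by field_simp⟩
  have hrs1 : rs * (2 * Kc) < c := by nlinarith
  have hinva : L + Kc * rs ^ 2 ≤ c * rs := by
    have h2 : (rs * (c * (4 * Kc))) ^ 2 = (L * (4 * Kc) + c ^ 2) ^ 2 := by rw [hrsX]
    have hA : (0:ℝ) ≤ L * (4 * Kc) := mul_nonneg hL0 (by linarith)
    have hc2 : (0:ℝ) < c ^ 2 := by positivity
    have h3 : (0:ℝ) ≤ (c ^ 2 - L * (4 * Kc)) * (L * (4 * Kc) + 3 * c ^ 2) :=
      mul_nonneg (by linarith) (by linarith)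
    have h4 : 16 * c ^ 2 * Kc ^ 2 * (c * rs - Kc * rs ^ 2 - L)
        = Kc * ((c ^ 2 - L * (4 * Kc)) * (L * (4 * Kc) + 3 * c ^ 2)) := by
      linear_combination (4 * c ^ 2 * Kc) * hrsX - Kc * h2
    nlinarith [h4, h3, mul_pos (mul_pos (mul_pos hc hc) hKc0) hKc0, hKc0.le]
  -- contraction constant
  have hqnn : (0:ℝ) ≤ 2 * Kc * rs / c := by positivity
  set q : NNReal := ⟨2 * Kc * rs / c, hqnn⟩ with hq
  have hq1 : (q : ℝ) < 1 := by
    show 2 * Kc * rs / c < 1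
    rw [div_lt_one hc]
    nlinarith
  -- the closed ball in K with the induced metric
  let X := Metric.closedBall (0 : K) rs
  haveI hXc : CompleteSpace X := IsClosed.completeSpace_coe (hs := Metric.isClosed_closedBall)
  haveI hXne : Nonempty X := ⟨⟨0, Metric.mem_closedBall_self hrs0.le⟩⟩
  have hmemX : ∀ x : X, ‖(x : K)‖ ≤ rs := by
    intro x
    have := x.2
    rwa [Metric.mem_closedBall, dist_zero_right] at this
  have hΦmaps : ∀ u : K, ‖u‖ ≤ rs → ‖Φ u‖ ≤ rs := by
    intro u hu
    have h1 := hΦbound u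
    have h2 : Kc * ‖u‖ ^ 2 ≤ Kc * rs ^ 2 := by
      have h2a : ‖u‖ * ‖u‖ ≤ rs * rs := mul_le_mul hu hu (norm_nonneg u) hrs0.le
      calc Kc * ‖u‖ ^ 2 = Kc * (‖u‖ * ‖u‖) := by ring
      _ ≤ Kc * (rs * rs) := mul_le_mul_of_nonneg_left h2a hKc0.le
      _ = Kc * rs ^ 2 := by ring
    have h3 : c * ‖Φ u‖ ≤ c * rs := by linarith
    exact le_of_mul_le_mul_left h3 hc
  let f : X → X := fun x => ⟨Φ (x : K), by
    rw [Metric.mem_closedBall, dist_zero_right]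
    exact hΦmaps _ (hmemX x)⟩
  have hcontr : ContractingWith q f := by
    constructor
    · exact_mod_cast hq1
    · apply LipschitzWith.of_dist_le_mul
      intro x y
      have h1 := hΦlip (x : K) (y : K)
      have h2 : Kc * (‖(x : K)‖ + ‖(y : K)‖) * ‖(x : K) - (y : K)‖
          ≤ 2 * Kc * rs * ‖(x : K) - (y : K)‖ := by
        have hxy : ‖(x : K)‖ + ‖(y : K)‖ ≤ 2 * rs := by
          linarith [hmemX x, hmemX y]
        calc Kc * (‖(x : K)‖ + ‖(y : K)‖) * ‖(x : K) - (y : K)‖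
            ≤ Kc * (2 * rs) * ‖(x : K) - (y : K)‖ :=
              mul_le_mul_of_nonneg_right (mul_le_mul_of_nonneg_left hxy hKc0.le)
                (norm_nonneg _)
        _ = 2 * Kc * rs * ‖(x : K) - (y : K)‖ := by ring
      have h3 : c * ‖Φ (x : K) - Φ (y : K)‖ ≤ 2 * Kc * rs * ‖(x : K) - (y : K)‖ :=
        le_trans h1 h2
      show dist (f x) (f y) ≤ (q : ℝ) * dist x y
      calc dist (f x) (f y) = ‖Φ (x : K) - Φ (y : K)‖ := by
            rw [Subtype.dist_eq, dist_eq_norm]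
      _ ≤ (q : ℝ) * dist x y := by
            rw [Subtype.dist_eq, dist_eq_norm]
            show _ ≤ 2 * Kc * rs / c * ‖(x : K) - (y : K)‖
            rw [div_mul_eq_mul_div, le_div_iff₀ hc]
            linarith
  set u₀ : X := ContractingWith.fixedPoint f hcontr with hu₀
  have hu₀fix : f u₀ = u₀ := hcontr.fixedPoint_isFixedPt
  have hΦu₀ : Φ ((u₀ : K)) = (u₀ : K) := congrArg Subtype.val hu₀fix
  -- assemble the result
  refine ⟨rs, hrs0, ?_, ?_⟩
  · have : c / (2 * ‖T‖ ^ 3 * ‖A₁‖) = c / (2 * Kc) := by rw [hKc]; ring_nf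
    rw [this, lt_div_iff₀ (by positivity)]
    linarith [hrs1]
  · refine ⟨((u₀ : K) : H), ⟨SetLike.coe_mem _, ?_, ?_⟩, ?_⟩
    · exact hmemX u₀
    · exact (hfix _).mp hΦu₀
    · rintro u' ⟨hmem', hnorm', heq'⟩
      set v' : K := ⟨u', hmem'⟩ with hv'
      have hΦv' : Φ v' = v' := (hfix v').mpr heq'
      have hnv' : ‖v'‖ ≤ rs := hnorm'
      have h1 := hΦlip v' (u₀ : K)
      rw [hΦv', hΦu₀] at h1
      have h2 : Kc * (‖v'‖ + ‖(u₀ : K)‖) * ‖v' - (u₀ : K)‖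
          ≤ 2 * Kc * rs * ‖v' - (u₀ : K)‖ := by
        have hxy : ‖v'‖ + ‖(u₀ : K)‖ ≤ 2 * rs := by
          linarith [hmemX u₀]
        calc Kc * (‖v'‖ + ‖(u₀ : K)‖) * ‖v' - (u₀ : K)‖
            ≤ Kc * (2 * rs) * ‖v' - (u₀ : K)‖ :=
              mul_le_mul_of_nonneg_right (mul_le_mul_of_nonneg_left hxy hKc0.le)
                (norm_nonneg _)
        _ = 2 * Kc * rs * ‖v' - (u₀ : K)‖ := by ring
      have h3 : ‖v' - (u₀ : K)‖ ≤ 0 := by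
        by_contra hpos
        push_neg at hpos
        have h5 : 2 * Kc * rs * ‖v' - (u₀ : K)‖ < c * ‖v' - (u₀ : K)‖ := by
          apply mul_lt_mul_of_pos_right _ hpos
          linarith
        linarith [le_trans h1 h2]
      have h4 : v' = (u₀ : K) := by
        have h5 : ‖v' - (u₀ : K)‖ = 0 := le_antisymm h3 (norm_nonneg _)
        rwa [norm_sub_eq_zero_iff] at h5
      exact congrArg Subtype.val h4
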